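/- Let 2 < p < ∞, t > 0, s > 0, and suppose there exists C ≥ 0 such that for every f ∈ L^p(ℂⁿ, dv_s) the function w ↦ e^{t⟨z,w⟩} f(w) is dv_t-integrable for a.e. z ∈ ℂⁿ and ∫_{ℂⁿ} |S_t f|^p dv_s ≤ C^p ∫_{ℂⁿ} |f|^p dv_s, where S_t f(z) = ∫_{ℂⁿ} e^{t⟨z,w⟩} f(w) dv_t(w). Then p·t = 2s. -/

import Mathlib

open MeasureTheory

/-- `|z|² = |z₁|² + ⋯ + |zₙ|²` on `ℂⁿ`. -/
noncomputable def nsq {n : ℕ} (z : Fin n → ℂ) : ℝ := ∑ i, Complex.normSq (z i)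

/-- `⟨z,w⟩ = z₁·conj w₁ + ⋯ + zₙ·conj wₙ` on `ℂⁿ`. -/
noncomputable def herm {n : ℕ} (z w : Fin n → ℂ) : ℂ := ∑ i, z i * (starRingEnd ℂ) (w i)

/-- The Gaussian probability measure `dv_t(z) = (t/π)^n e^{-t|z|²} dv(z)` on `ℂⁿ`. -/
noncomputable def gaussMeasure (n : ℕ) (t : ℝ) : Measure (Fin n → ℂ) :=
  volume.withDensity fun z => ENNReal.ofReal ((t / Real.pi) ^ n * Real.exp (-t * nsq z))

/-- Boundedness of the operator `S_t f(z) = ∫ e^{t⟨z,w⟩} f(w) dv_t(w)` on `L^p(ℂⁿ, dv_s)`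
with constant `C`: for every `f ∈ L^p(dv_s)` the integrand is `dv_t`-integrable for a.e. `z`
and `∫ |S_t f|^p dv_s ≤ C^p ∫ |f|^p dv_s`. -/
def SBounded (n : ℕ) (t s p C : ℝ) : Prop :=
  ∀ f : (Fin n → ℂ) → ℂ, MemLp f (ENNReal.ofReal p) (gaussMeasure n s) →
    (∀ᵐ z ∂(volume : Measure (Fin n → ℂ)),
      Integrable (fun w => Complex.exp ((t : ℂ) * herm z w) * f w) (gaussMeasure n t)) ∧
    ∫⁻ z, ENNReal.ofReal
        (‖∫ w, Complex.exp ((t : ℂ) * herm z w) * f w ∂(gaussMeasure n t)‖ ^ p)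
      ∂(gaussMeasure n s)
      ≤ ENNReal.ofReal (C ^ p) *
        ∫⁻ z, ENNReal.ofReal (‖f z‖ ^ p) ∂(gaussMeasure n s)

open Complex
open scoped NNReal ENNReal

lemma gauss1 {t : ℝ} (ht : 0 < t) (α β : ℂ) :
    Integrable (fun w : ℂ =>
      Complex.exp (α * w + β * (starRingEnd ℂ) w - t * Complex.normSq w)) ∧
    ∫ w : ℂ, Complex.exp (α * w + β * (starRingEnd ℂ) w - t * Complex.normSq w)
      = ((Real.pi / t : ℝ) : ℂ) * Complex.exp (α * β / t) := by
  have ht0 : (t : ℂ) ≠ 0 := Complex.ofReal_ne_zero.mpr ht.ne'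
  have ht' : (t : ℂ).re > 0 := by simpa using ht
  have ht'' : (-(t:ℂ)).re < 0 := by simpa using ht
  set F : ℂ → ℂ := fun w =>
    Complex.exp (α * w + β * (starRingEnd ℂ) w - t * Complex.normSq w) with hF
  have hkey : ∀ p : ℝ × ℝ,
      F (Complex.measurableEquivRealProd.symm p)
      = Complex.exp (-(t:ℂ) * p.1 ^ 2 + (α + β) * p.1 + 0)
        * Complex.exp (-(t:ℂ) * p.2 ^ 2 + ((α - β) * Complex.I) * p.2 + 0) := by
    intro p
    rw [hF]
    simp only [Complex.measurableEquivRealProd_symm_apply, Complex.mk_eq_add_mul_I,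
      ← Complex.exp_add]
    congr 1
    rw [Complex.normSq_add_mul_I]
    simp only [map_add, map_mul, Complex.conj_ofReal, Complex.conj_I]
    push_cast
    ring
  have hint1 : Integrable (fun x : ℝ => Complex.exp (-(t:ℂ) * x ^ 2 + (α + β) * x + 0)) :=
    integrable_cexp_quadratic ht' _ _
  have hint2 : Integrable (fun x : ℝ =>
      Complex.exp (-(t:ℂ) * x ^ 2 + ((α - β) * Complex.I) * x + 0)) :=
    integrable_cexp_quadratic ht' _ _
  have hIntProd : Integrable (fun p : ℝ × ℝ => F (Complex.measurableEquivRealProd.symm p)) := by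
    refine Integrable.congr ?_ (ae_of_all _ fun p => (hkey p).symm)
    rw [Measure.volume_eq_prod]
    exact Integrable.mul_prod hint1 hint2
  have hMP := Complex.volume_preserving_equiv_real_prod.symm
  have hIntF : Integrable F := by
    rw [← MeasurePreserving.integrable_comp_emb hMP
      (MeasurableEquiv.measurableEmbedding _)]
    exact hIntProd
  refine ⟨hIntF, ?_⟩
  have h1 : ∫ w : ℂ, F w = ∫ p : ℝ × ℝ, F (Complex.measurableEquivRealProd.symm p) :=
    (hMP.integral_comp' F).symm
  rw [h1]
  have h2 : ∫ p : ℝ × ℝ, F (Complex.measurableEquivRealProd.symm p)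
      = (∫ x : ℝ, Complex.exp (-(t:ℂ) * x ^ 2 + (α + β) * x + 0))
        * ∫ x : ℝ, Complex.exp (-(t:ℂ) * x ^ 2 + ((α - β) * Complex.I) * x + 0) := by
    rw [Measure.volume_eq_prod, ← integral_prod_mul]
    exact integral_congr_ae (ae_of_all _ hkey)
  rw [h2, integral_cexp_quadratic ht'' _ _, integral_cexp_quadratic ht'' _ _]
  have hsq : ((Real.pi : ℂ) / -(-(t:ℂ))) ^ (1/2 : ℂ) * ((Real.pi : ℂ) / -(-(t:ℂ))) ^ (1/2 : ℂ)
      = ((Real.pi / t : ℝ) : ℂ) := by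
    rw [neg_neg, ← Complex.cpow_add _ _ (div_ne_zero (Complex.ofReal_ne_zero.mpr
      Real.pi_ne_zero) ht0)]
    norm_num
  calc (((Real.pi:ℂ) / -(-(t:ℂ))) ^ (1/2:ℂ) * Complex.exp (0 - (α+β)^2 / (4 * -(t:ℂ))))
        * (((Real.pi:ℂ) / -(-(t:ℂ))) ^ (1/2:ℂ)
            * Complex.exp (0 - ((α-β)*Complex.I)^2 / (4 * -(t:ℂ))))
      = (((Real.pi:ℂ) / -(-(t:ℂ))) ^ (1/2:ℂ) * ((Real.pi:ℂ) / -(-(t:ℂ))) ^ (1/2:ℂ))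
          * (Complex.exp (0 - (α+β)^2 / (4 * -(t:ℂ)))
            * Complex.exp (0 - ((α-β)*Complex.I)^2 / (4 * -(t:ℂ)))) := by ring
    _ = ((Real.pi / t : ℝ) : ℂ) * Complex.exp (α * β / t) := by
        rw [hsq, ← Complex.exp_add]
        congr 1
        rw [mul_pow, Complex.I_sq]
        field_simp
        ring

lemma gaussN {n : ℕ} {t : ℝ} (ht : 0 < t) (α β : Fin n → ℂ) :
    Integrable (fun w : Fin n → ℂ =>
      Complex.exp (∑ i, (α i * w i + β i * (starRingEnd ℂ) (w i)) - t * nsq w)) ∧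
    ∫ w : Fin n → ℂ,
        Complex.exp (∑ i, (α i * w i + β i * (starRingEnd ℂ) (w i)) - t * nsq w)
      = ((Real.pi / t : ℝ) : ℂ) ^ n * Complex.exp ((∑ i, α i * β i) / t) := by
  have hrw : ∀ w : Fin n → ℂ,
      Complex.exp (∑ i, (α i * w i + β i * (starRingEnd ℂ) (w i)) - t * nsq w)
      = ∏ i, Complex.exp (α i * w i + β i * (starRingEnd ℂ) (w i) - t * Complex.normSq (w i)) := by
    intro w
    rw [← Complex.exp_sum]
    congr 1
    rw [nsq]
    push_cast
    rw [Finset.mul_sum, ← Finset.sum_sub_distrib]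
  have hint : ∀ i : Fin n, Integrable (fun u : ℂ =>
      Complex.exp (α i * u + β i * (starRingEnd ℂ) u - t * Complex.normSq u)) :=
    fun i => (gauss1 ht (α i) (β i)).1
  constructor
  · exact (Integrable.fintype_prod (f := fun i (u : ℂ) =>
      Complex.exp (α i * u + β i * (starRingEnd ℂ) u - t * Complex.normSq u)) hint).congr
      (ae_of_all _ fun w => (hrw w).symm)
  · simp_rw [hrw]
    rw [integral_fintype_prod_volume_eq_prod (f := fun i (u : ℂ) =>
      Complex.exp (α i * u + β i * (starRingEnd ℂ) u - t * Complex.normSq u))]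
    have : ∀ i : Fin n, ∫ u : ℂ,
        Complex.exp (α i * u + β i * (starRingEnd ℂ) u - t * Complex.normSq u)
        = ((Real.pi / t : ℝ) : ℂ) * Complex.exp (α i * β i / t) :=
      fun i => (gauss1 ht (α i) (β i)).2
    simp_rw [this, Finset.prod_mul_distrib, Finset.prod_const, Finset.card_univ,
      Fintype.card_fin, ← Complex.exp_sum, Finset.sum_div]

lemma continuous_nsq {n : ℕ} : Continuous (nsq (n := n)) := by
  unfold nsq
  exact continuous_finset_sum _ fun i _ =>
    Complex.continuous_normSq.comp (continuous_apply i)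

lemma dens_nonneg {n : ℕ} (t : ℝ) (ht : 0 < t) (z : Fin n → ℂ) :
    0 ≤ (t / Real.pi) ^ n * Real.exp (-t * nsq z) := by positivity

lemma Sval {n : ℕ} {t : ℝ} (ht : 0 < t) (i0 : Fin n) (x : ℝ) (z : Fin n → ℂ) :
    ∫ w, Complex.exp ((t : ℂ) * herm z w) *
        Complex.exp ((x : ℂ) * w i0 + (starRingEnd ℂ) (w i0)) ∂(gaussMeasure n t)
      = Complex.exp ((x : ℂ) * z i0 + (x : ℂ) / (t : ℂ)) := by
  have ht0 : (t : ℂ) ≠ 0 := Complex.ofReal_ne_zero.mpr ht.ne'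
  have hπ0 : (Real.pi : ℝ) ≠ 0 := Real.pi_ne_zero
  set α : Fin n → ℂ := fun i => if i = i0 then (x : ℂ) else 0 with hα
  set β : Fin n → ℂ := fun i => (t : ℂ) * z i + (if i = i0 then 1 else 0) with hβ
  have hmeas : Measurable (fun w : Fin n → ℂ =>
      Real.toNNReal ((t / Real.pi) ^ n * Real.exp (-t * nsq w))) :=
    measurable_real_toNNReal.comp
      ((continuous_const.mul ((continuous_const.mul continuous_nsq).rexp)).measurable)
  have hμ : gaussMeasure n t = volume.withDensity
      (fun w => ((Real.toNNReal ((t / Real.pi) ^ n * Real.exp (-t * nsq w)) : ℝ≥0) : ℝ≥0∞)) :=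
    rfl
  rw [hμ, integral_withDensity_eq_integral_smul hmeas]
  have hptw : ∀ w : Fin n → ℂ,
      (Real.toNNReal ((t / Real.pi) ^ n * Real.exp (-t * nsq w)) : ℝ≥0) •
        (Complex.exp ((t : ℂ) * herm z w) *
          Complex.exp ((x : ℂ) * w i0 + (starRingEnd ℂ) (w i0)))
      = (((t / Real.pi) ^ n : ℝ) : ℂ) *
          Complex.exp (∑ i, (α i * w i + β i * (starRingEnd ℂ) (w i)) - t * nsq w) := by
    intro w
    rw [NNReal.smul_def, Real.coe_toNNReal _ (dens_nonneg t ht w), Complex.real_smul]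
    push_cast
    have hsum : ∑ i, (α i * w i + β i * (starRingEnd ℂ) (w i))
        = (x : ℂ) * w i0 + (starRingEnd ℂ) (w i0) + (t : ℂ) * herm z w := by
      rw [Finset.sum_add_distrib]
      have h1 : ∑ i, α i * w i = (x : ℂ) * w i0 := by
        rw [hα]
        simp [ite_mul, Finset.sum_ite_eq']
      have h2 : ∑ i, β i * (starRingEnd ℂ) (w i)
          = (t : ℂ) * herm z w + (starRingEnd ℂ) (w i0) := by
        rw [hβ, herm, Finset.mul_sum]
        simp only [add_mul, ite_mul, one_mul, zero_mul, Finset.sum_add_distrib,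
          Finset.sum_ite_eq', Finset.mem_univ, if_true]
        ring_nf
      rw [h1, h2]
      ring
    rw [hsum, sub_eq_add_neg, neg_mul]
    simp only [Complex.exp_add]
    ring
  simp_rw [hptw]
  rw [integral_const_mul, (gaussN ht α β).2]
  have hsum2 : ∑ i, α i * β i = (x : ℂ) * ((t : ℂ) * z i0 + 1) := by
    rw [hα, hβ]
    simp [ite_mul, Finset.sum_ite_eq']
  rw [hsum2]
  have hconst : (((t / Real.pi) ^ n : ℝ) : ℂ) * ((Real.pi / t : ℝ) : ℂ) ^ n = 1 := by
    push_cast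
    rw [← mul_pow]
    have h1 : ((t:ℂ)/(Real.pi:ℂ)) * ((Real.pi:ℂ)/(t:ℂ)) = 1 := by
      rw [div_mul_div_comm, mul_comm]
      exact div_self (by simp [ht0, Complex.ofReal_ne_zero.mpr hπ0, mul_ne_zero])
    rw [h1, one_pow]
  have harg : (x : ℂ) * ((t : ℂ) * z i0 + 1) / (t : ℂ) = (x : ℂ) * z i0 + (x : ℂ) / (t : ℂ) := by
    field_simp
  rw [← mul_assoc, hconst, one_mul, harg]

lemma lint_gauss {n : ℕ} {s : ℝ} (hs : 0 < s) (i0 : Fin n) (c d : ℝ) :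
    ∫⁻ z, ENNReal.ofReal (Real.exp (c * (z i0).re + d)) ∂(gaussMeasure n s)
      = ENNReal.ofReal (Real.exp (c ^ 2 / (4 * s) + d)) := by
  have hπ : (0:ℝ) < Real.pi := Real.pi_pos
  have hdensm : Measurable (fun z : Fin n → ℂ =>
      ENNReal.ofReal ((s / Real.pi) ^ n * Real.exp (-s * nsq z))) :=
    ENNReal.measurable_ofReal.comp
      (continuous_const.mul ((continuous_const.mul continuous_nsq).rexp)).measurable
  have hgm : Measurable (fun z : Fin n → ℂ =>
      ENNReal.ofReal (Real.exp (c * (z i0).re + d))) := by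
    apply ENNReal.measurable_ofReal.comp
    exact (((continuous_const.mul ((Complex.continuous_re).comp
      (continuous_apply i0))).add continuous_const).rexp).measurable
  set G : (Fin n → ℂ) → ℝ := fun z =>
    (s / Real.pi) ^ n * Real.exp (-s * nsq z) * Real.exp (c * (z i0).re + d) with hG
  have hGnn : ∀ z, 0 ≤ G z := fun z => by rw [hG]; positivity
  set α : Fin n → ℂ := fun i => if i = i0 then ((c/2 : ℝ) : ℂ) else 0 with hα
  have hsum : ∀ z : Fin n → ℂ, ∑ i, (α i * z i + α i * (starRingEnd ℂ) (z i))
      = ((c * (z i0).re : ℝ) : ℂ) := by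
    intro z
    simp only [hα, ite_mul, zero_mul, ite_add_ite, add_zero, ← mul_add,
      Finset.sum_ite_eq', Finset.mem_univ, if_true, Complex.add_conj]
    push_cast
    ring
  have hkey : ∀ z : Fin n → ℂ, ((G z : ℝ) : ℂ)
      = (((s / Real.pi) ^ n * Real.exp d : ℝ) : ℂ) *
        Complex.exp (∑ i, (α i * z i + α i * (starRingEnd ℂ) (z i)) - s * nsq z) := by
    intro z
    rw [hsum, hG]
    push_cast
    rw [mul_assoc, mul_assoc, ← Complex.exp_add, ← Complex.exp_add]
    congr 2
    push_cast
    ring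
  have hIntC : Integrable (fun z : Fin n → ℂ => ((G z : ℝ) : ℂ)) := by
    simp_rw [hkey]
    exact (gaussN hs α α).1.const_mul _
  have hIntG : Integrable G := by
    have h := hIntC.re
    simpa using h
  have hαα : ∑ i, α i * α i = (((c ^ 2 / 4 : ℝ)) : ℂ) := by
    simp only [hα, ite_mul, zero_mul, mul_ite, mul_zero, Finset.sum_ite_eq',
      Finset.mem_univ, if_true]
    push_cast
    ring
  have hIG : ∫ z, G z = Real.exp (c ^ 2 / (4 * s) + d) := by
    have h2 : ((∫ z, G z : ℝ) : ℂ) = ∫ z : Fin n → ℂ, ((G z : ℝ) : ℂ) :=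
      integral_ofReal.symm
    have h3 : ∫ z : Fin n → ℂ, ((G z : ℝ) : ℂ)
        = (((s / Real.pi) ^ n * Real.exp d : ℝ) : ℂ) *
          (((Real.pi / s : ℝ) : ℂ) ^ n * Complex.exp ((∑ i, α i * α i) / s)) := by
      simp_rw [hkey]
      rw [integral_const_mul, (gaussN hs α α).2]
    have h4 : (((s / Real.pi) ^ n * Real.exp d : ℝ) : ℂ) *
          (((Real.pi / s : ℝ) : ℂ) ^ n * Complex.exp ((∑ i, α i * α i) / s))
        = ((Real.exp (c ^ 2 / (4 * s) + d) : ℝ) : ℂ) := by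
      rw [hαα]
      have hconst : (((s / Real.pi) ^ n : ℝ) : ℂ) * (((Real.pi / s : ℝ)) : ℂ) ^ n = 1 := by
        push_cast
        rw [← mul_pow]
        have h1 : ((s:ℂ)/(Real.pi:ℂ)) * ((Real.pi:ℂ)/(s:ℂ)) = 1 := by
          rw [div_mul_div_comm, mul_comm]
          exact div_self (by
            simp [Complex.ofReal_ne_zero.mpr hs.ne', Complex.ofReal_ne_zero.mpr hπ.ne',
              mul_ne_zero])
        rw [h1, one_pow]
      push_cast
      push_cast at hconst
      rw [Complex.exp_add]
      rw [show ((c:ℂ)^2/4)/(s:ℂ) = (c:ℂ)^2/(4*(s:ℂ)) by ring]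
      calc ((s:ℂ)/Real.pi) ^ n * Complex.exp d *
            (((Real.pi:ℂ)/s) ^ n * Complex.exp ((c:ℂ)^2/(4*(s:ℂ))))
          = (((s:ℂ)/Real.pi) ^ n * ((Real.pi:ℂ)/s) ^ n) *
            (Complex.exp ((c:ℂ)^2/(4*(s:ℂ))) * Complex.exp d) := by ring
        _ = Complex.exp ((c:ℂ)^2/(4*(s:ℂ))) * Complex.exp d := by rw [hconst, one_mul]
    have := h2.trans (h3.trans h4)
    exact_mod_cast this
  have hμint : ∫⁻ z, ENNReal.ofReal (Real.exp (c * (z i0).re + d)) ∂(gaussMeasure n s)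
      = ∫⁻ z, ENNReal.ofReal (G z) := by
    simp only [gaussMeasure]
    rw [lintegral_withDensity_eq_lintegral_mul volume hdensm hgm]
    refine lintegral_congr fun z => ?_
    simp only [Pi.mul_apply]
    rw [hG, ← ENNReal.ofReal_mul (by positivity)]
  rw [hμint, ← ofReal_integral_eq_lintegral_ofReal hIntG (ae_of_all _ hGnn), hIG]

lemma abs_cexp_lin (x : ℝ) (u : ℂ) :
    ‖Complex.exp ((x : ℂ) * u + (starRingEnd ℂ) u)‖ = Real.exp ((x + 1) * u.re) := by
  rw [Complex.norm_exp]
  congr 1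
  simp [Complex.add_re, Complex.mul_re, Complex.conj_re]
  ring

lemma exp_rpow (r q : ℝ) : (Real.exp r) ^ q = Real.exp (r * q) := by
  rw [Real.rpow_def_of_pos (Real.exp_pos _), Real.log_exp]

lemma memLp_f {n : ℕ} {s p : ℝ} (hs : 0 < s) (hp : 0 < p) (i0 : Fin n) (x : ℝ) :
    MemLp (fun w : Fin n → ℂ => Complex.exp ((x : ℂ) * w i0 + (starRingEnd ℂ) (w i0)))
      (ENNReal.ofReal p) (gaussMeasure n s) := by
  have hcont : Continuous fun w : Fin n → ℂ =>
      Complex.exp ((x : ℂ) * w i0 + (starRingEnd ℂ) (w i0)) := by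
    apply Complex.continuous_exp.comp
    exact (continuous_const.mul (continuous_apply i0)).add
      (Complex.continuous_conj.comp (continuous_apply i0))
  refine ⟨hcont.aestronglyMeasurable, ?_⟩
  rw [eLpNorm_eq_lintegral_rpow_enorm_toReal (by simp [hp]) (by simp)]
  refine ENNReal.rpow_lt_top_of_nonneg (by positivity) ?_
  have hto : (ENNReal.ofReal p).toReal = p := ENNReal.toReal_ofReal hp.le
  rw [hto]
  have hptw : ∀ w : Fin n → ℂ,
      ((‖Complex.exp ((x : ℂ) * w i0 + (starRingEnd ℂ) (w i0))‖ₑ : ℝ≥0∞)) ^ p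
      = ENNReal.ofReal (Real.exp (((x + 1) * p) * (w i0).re + 0)) := by
    intro w
    rw [← ofReal_norm, ENNReal.ofReal_rpow_of_nonneg (norm_nonneg _) hp.le]
    congr 1
    rw [abs_cexp_lin, exp_rpow]
    ring_nf
  simp_rw [hptw]
  rw [lint_gauss hs i0 _ 0]
  exact ENNReal.ofReal_ne_top

theorem stmt7 (n : ℕ) (hn : 0 < n) (p t s : ℝ) (hp : 2 < p)
    (ht : 0 < t) (hs : 0 < s)
    (h : ∃ C : ℝ, 0 ≤ C ∧ SBounded n t s p C) :
    p * t = 2 * s := by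
  obtain ⟨C, hC0, hSB⟩ := h
  have hp0 : 0 < p := by linarith
  set i0 : Fin n := ⟨0, hn⟩
  have key : ∀ x : ℝ, x * (p / t - p ^ 2 / (2 * s)) ≤ Real.log (C ^ p) + p ^ 2 / (4 * s) := by
    intro x
    obtain ⟨-, hineq⟩ := hSB _ (memLp_f hs hp0 i0 x)
    have hzpt : ∀ z : Fin n → ℂ,
        ‖∫ w, Complex.exp ((t : ℂ) * herm z w) *
            Complex.exp ((x : ℂ) * w i0 + (starRingEnd ℂ) (w i0)) ∂(gaussMeasure n t)‖ ^ p
        = Real.exp ((p * x) * (z i0).re + p * (x / t)) := by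
      intro z
      rw [Sval ht i0 x z, Complex.norm_exp, exp_rpow]
      congr 1
      have : ((x : ℂ) / (t : ℂ)) = ((x / t : ℝ) : ℂ) := by push_cast; ring
      rw [this]
      simp [Complex.add_re, Complex.mul_re]
      ring
    have hrpt : ∀ z : Fin n → ℂ,
        ‖Complex.exp ((x : ℂ) * z i0 + (starRingEnd ℂ) (z i0))‖ ^ p
        = Real.exp ((p * (x + 1)) * (z i0).re + 0) := by
      intro z
      rw [abs_cexp_lin, exp_rpow]
      congr 1
      ring
    clear_value i0
    simp_rw [hzpt, hrpt] at hineq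
    rw [lint_gauss hs i0 (p * x) (p * (x / t)), lint_gauss hs i0 (p * (x + 1)) 0] at hineq
    rw [← ENNReal.ofReal_mul (Real.rpow_nonneg hC0 p)] at hineq
    have hreal : Real.exp ((p * x) ^ 2 / (4 * s) + p * (x / t))
        ≤ C ^ p * Real.exp ((p * (x + 1)) ^ 2 / (4 * s) + 0) :=
      (ENNReal.ofReal_le_ofReal_iff (mul_nonneg (Real.rpow_nonneg hC0 p)
        (Real.exp_pos _).le)).mp hineq
    have hCp : 0 < C ^ p := by
      by_contra hc
      push_neg at hc
      nlinarith [Real.exp_pos ((p * x) ^ 2 / (4 * s) + p * (x / t)),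
        Real.exp_pos ((p * (x + 1)) ^ 2 / (4 * s) + 0)]
    have hlog : (p * x) ^ 2 / (4 * s) + p * (x / t)
        ≤ Real.log (C ^ p) + ((p * (x + 1)) ^ 2 / (4 * s) + 0) := by
      have h1 := (Real.log_le_log_iff (Real.exp_pos _)
        (mul_pos hCp (Real.exp_pos _))).mpr hreal
      rwa [Real.log_exp, Real.log_mul hCp.ne' (Real.exp_pos _).ne', Real.log_exp] at h1
    have e1 : (p * (x + 1)) ^ 2 / (4 * s)
        = (p * x) ^ 2 / (4 * s) + x * (p ^ 2 / (2 * s)) + p ^ 2 / (4 * s) := by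
      field_simp
      ring
    have e2 : p * (x / t) = x * (p / t) := by ring
    have e3 : x * (p / t - p ^ 2 / (2 * s)) = x * (p / t) - x * (p ^ 2 / (2 * s)) := by ring
    linarith
  have hA : p / t - p ^ 2 / (2 * s) = 0 := by
    by_contra hA
    have h1 := key ((Real.log (C ^ p) + p ^ 2 / (4 * s) + 1) / (p / t - p ^ 2 / (2 * s)))
    rw [div_mul_cancel₀ _ hA] at h1
    linarith
  have h2 : p / t = p ^ 2 / (2 * s) := by linarith
  have h3 : p * (2 * s) = p ^ 2 * t := by
    field_simp at h2
    rw [h2]; ring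
  have h4 : p * (2 * s) = p * (p * t) := by linarith [h3]; 
  have := mul_left_cancel₀ hp0.ne' h4
  linarith
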